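/- If ⟨t₁, p₁⟩ ∼sf ⟨t₂, p₂⟩ is a single fork between term nodes, then for every r ∈ valid(t₁[p₁]), ⟨t₁, p₁r⟩ ∼sf ⟨t₂, p₂r⟩ is also a single fork. -/
import Mathlib


namespace HashAlpha

/-- g-terms: λ-terms with de Bruijn indices, extended with global variables `gvar t`. -/
inductive GTerm : Type
  | var : ℕ → GTerm
  | app : GTerm → GTerm → GTerm
  | lam : GTerm → GTerm
  | gvar : GTerm → GTerm
  deriving DecidableEq

/-- A g-term is a pure λ-term if it contains no global variables. -/
def GTerm.IsPure : GTerm → Prop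
  | .var _ => True
  | .app a b => a.IsPure ∧ b.IsPure
  | .lam a => a.IsPure
  | .gvar _ => False

/-- Directions for term positions: ↓, ↙, ↘. -/
inductive Dir : Type
  | down | left | right
  deriving DecidableEq

/-- A term position is a word over {↓, ↙, ↘}. -/
abbrev Pos := List Dir

/-- `|p|_λ`: the number of ↓'s in a position. -/
def lamDepth (p : Pos) : ℕ := p.count Dir.down

/-- Term indexing `t[p]` (partial; does not descend into global variables). -/
def GTerm.index : GTerm → Pos → Option GTerm
  | t, [] => some t
  | .app a _, .left :: p => a.index p
  | .app _ b, .right :: p => b.index p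
  | .lam a, .down :: p => a.index p
  | _, _ => none

/-- `valid(t)`: the set of positions where `t[p]` is defined. -/
def Valid (t : GTerm) : Set Pos := {p | (t.index p).isSome}

/-- `vars(t)`: positions of variables. -/
def Vars (t : GTerm) : Set Pos := {p | ∃ i, t.index p = some (.var i)}

/-- `free(t)`: positions of free variables. -/
def Free (t : GTerm) : Set Pos :=
  {p | ∃ i, t.index p = some (.var i) ∧ lamDepth p ≤ i}

/-- A term is closed if it has no free variables. -/
def Closed (t : GTerm) : Prop := Free t = ∅

/-- `p` is locally closed in `t`: every free variable of `t[p]` is also free in `t`. -/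
def LocallyClosed (t : GTerm) (p : Pos) : Prop :=
  p ∈ Valid t ∧ ∀ u, t.index p = some u → ∀ q ∈ Free u, p ++ q ∈ Free t

/-- Subtract `d0` from every free variable (`d` is the current binder depth). -/
def declift (d0 : ℕ) : GTerm → ℕ → GTerm
  | .var j, d => if d ≤ j then .var (j - d0) else .var j
  | .app a b, d => .app (declift d0 a d) (declift d0 b d)
  | .lam a, d => .lam (declift d0 a (d + 1))
  | .gvar a, _ => .gvar a

/-- The lift `⟨t⟩p`: equal to `t[p]` except every free variable of `t[p]` is
decremented by `|p|_λ`. -/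
def liftAt (t : GTerm) (p : Pos) : Option GTerm :=
  (t.index p).map (fun u => declift (lamDepth p) u 0)

/-- Transition labels: ↓, ↙, ↘ and ↑. -/
inductive Lab : Type
  | down | left | right | up
  deriving DecidableEq

def Lab.ofDir : Dir → Lab
  | .down => .down
  | .left => .left
  | .right => .right

/-- Transitions between term nodes. -/
inductive Trans : GTerm × Pos → Lab → GTerm × Pos → Prop
  | dir (t : GTerm) (p : Pos) (x : Dir) :
      (p ++ [x]) ∈ Valid t → Trans (t, p) (Lab.ofDir x) (t, p ++ [x])
  | up (t : GTerm) (q r : Pos) :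
      t.index (q ++ Dir.down :: r) = some (.var (lamDepth r)) →
      Trans (t, q ++ Dir.down :: r) Lab.up (t, q)

/-- `R` is a bisimulation. -/
def IsBisim (R : GTerm × Pos → GTerm × Pos → Prop) : Prop :=
  ∀ n₁ n₂, R n₁ n₂ → ∀ x : Lab,
    (∀ n₁', Trans n₁ x n₁' → ∃ n₂', Trans n₂ x n₂' ∧ R n₁' n₂') ∧
    (∀ n₂', Trans n₂ x n₂' → ∃ n₁', Trans n₁ x n₁' ∧ R n₁' n₂')

/-- Two nodes are bisimilar when some bisimulation relates them. -/
def Bisim (n₁ n₂ : GTerm × Pos) : Prop := ∃ R, IsBisim R ∧ R n₁ n₂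

/-- `(t, p)` is a term node: `t` is closed and `p ∈ valid(t)`. -/
def IsNode (t : GTerm) (p : Pos) : Prop := Closed t ∧ p ∈ Valid t

/-- A single fork between term nodes (let-abs rule or closed rule). -/
def SingleFork (n₁ n₂ : GTerm × Pos) : Prop :=
  (∃ t p q₁ q₂ r u,
      n₁ = (t, p ++ q₁ ++ r) ∧ n₂ = (t, p ++ q₂ ++ r) ∧
      IsNode t (p ++ q₁ ++ r) ∧ IsNode t (p ++ q₂ ++ r) ∧
      t.index p = some u ∧ LocallyClosed u q₁ ∧ liftAt u q₁ = liftAt u q₂) ∨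
  (∃ t₁ t₂ p₁ p₂ r u,
      n₁ = (t₁, p₁ ++ r) ∧ n₂ = (t₂, p₂ ++ r) ∧
      IsNode t₁ (p₁ ++ r) ∧ IsNode t₂ (p₂ ++ r) ∧
      t₁.index p₁ = some u ∧ Closed u ∧ t₂.index p₂ = some u)

/-- Fork equivalence: the transitive closure of single forks. -/
def ForkEquiv : GTerm × Pos → GTerm × Pos → Prop := Relation.TransGen SingleFork

/-- Shift free variables ≥ `c` up by `d`. -/
def shiftAux (c d : ℕ) : GTerm → GTerm
  | .var j => if j < c then .var j else .var (j + d)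
  | .app a b => .app (shiftAux c d a) (shiftAux c d b)
  | .lam a => .lam (shiftAux (c + 1) d a)
  | .gvar a => .gvar a

/-- Capture-avoiding substitution of free variable `i` by `u` (at current depth `d`). -/
def substAux (i : ℕ) (u : GTerm) : ℕ → GTerm → GTerm
  | d, .var j => if j = i + d then shiftAux 0 d u else .var j
  | d, .app a b => .app (substAux i u d a) (substAux i u d b)
  | d, .lam a => .lam (substAux i u (d + 1) a)
  | _, .gvar a => .gvar a

/-- `t[i := u]`: capture-avoiding substitution of variable `i` by `u` in `t`. -/
def subst (i : ℕ) (u : GTerm) (t : GTerm) : GTerm := substAux i u 0 t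

/-- Simultaneous capture-avoiding substitution of variable `i` by `σᵢ`
(at current depth `d`). -/
def msubstAux (σ : List GTerm) : ℕ → GTerm → GTerm
  | d, .var j =>
      if j < d then .var j else shiftAux 0 d (σ.getD (j - d) (.var (j - d)))
  | d, .app a b => .app (msubstAux σ d a) (msubstAux σ d b)
  | d, .lam a => .lam (msubstAux σ (d + 1) a)
  | _, .gvar a => .gvar a

/-- `tσ`: simultaneous substitution of each variable `i` by the `i`-th element of `σ`. -/
def msubst (σ : List GTerm) (t : GTerm) : GTerm := msubstAux σ 0 t

/-- Term size (the term summary `|t|`); global variables count as leaves. -/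
def gsize : GTerm → ℕ
  | .var _ => 1
  | .gvar _ => 1
  | .app a b => gsize a + gsize b + 1
  | .lam a => gsize a + 1

theorem gsize_shiftAux (c d : ℕ) (t : GTerm) : gsize (shiftAux c d t) = gsize t := by
  induction t generalizing c with
  | var j => simp only [shiftAux]; split <;> rfl
  | app a b iha ihb => simp [shiftAux, gsize, iha, ihb]
  | lam a ih => simp [shiftAux, gsize, ih]
  | gvar a => rfl

theorem gsize_substAux_gvar (i : ℕ) (w : GTerm) (d : ℕ) (t : GTerm) :
    gsize (substAux i (.gvar w) d t) = gsize t := by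
  induction t generalizing d with
  | var j => simp only [substAux]; split <;> rfl
  | app a b iha ihb => simp [substAux, gsize, iha, ihb]
  | lam a ih => simp [substAux, gsize, ih]
  | gvar a => rfl

theorem gsize_msubstAux (σ : List GTerm) (h : ∀ u ∈ σ, ∃ w, u = .gvar w)
    (d : ℕ) (t : GTerm) : gsize (msubstAux σ d t) = gsize t := by
  induction t generalizing d with
  | var j =>
    simp only [msubstAux]
    split
    · rfl
    · rw [gsize_shiftAux]
      rcases Nat.lt_or_ge (j - d) σ.length with hl | hl
      · rw [List.getD_eq_getElem _ _ hl]
        obtain ⟨w, hw⟩ := h _ (List.getElem_mem hl)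
        rw [hw]; rfl
      · rw [List.getD_eq_default _ _ hl]; rfl
  | app a b iha ihb => simp [msubstAux, gsize, iha, ihb]
  | lam a ih => simp [msubstAux, gsize, ih]
  | gvar a => rfl

theorem gsize_msubst (σ : List GTerm) (h : ∀ u ∈ σ, ∃ w, u = .gvar w)
    (t : GTerm) : gsize (msubst σ t) = gsize t :=
  gsize_msubstAux σ h 0 t

/-- The naive globalization procedure. -/
def globalizeNaive : GTerm → GTerm
  | .lam t => .lam (globalizeNaive (subst 0 (.gvar (.lam t)) t))
  | .app t u => .app (globalizeNaive t) (globalizeNaive u)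
  | .gvar t => .gvar t
  | .var i => .var i
termination_by t => gsize t
decreasing_by
  · simp only [subst, gsize_substAux_gvar, gsize]; omega
  · simp only [gsize]; omega
  · simp only [gsize]; omega

/-- The strongly connected component of a closed g-term: positions all of whose
nonempty prefixes index open terms. -/
def SCC (t : GTerm) : Set Pos :=
  {p | p ∈ Valid t ∧ ∀ p' u, p' ≠ [] → p' <+: p → t.index p' = some u → ¬ Closed u}

/-- `duplicates(t)`: strict subterms in the SCC of `t` whose term summary (size)
is not unique within the SCC. -/
def duplicates (t : GTerm) : Set GTerm :=
  {u | ∃ p q v, p ∈ SCC t ∧ q ∈ SCC t ∧ p ≠ [] ∧ q ≠ [] ∧ p ≠ q ∧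
      t.index p = some u ∧ t.index q = some v ∧ gsize u = gsize v}

open Classical in
mutual
/-- Efficient globalization. -/
noncomputable def globalize (r : GTerm) : GTerm :=
  globalizeScc r [] (by simp) r
termination_by (gsize r, 2)
decreasing_by
  apply Prod.Lex.right; omega

noncomputable def globalizeScc (r : GTerm) (σ : List GTerm)
    (h : ∀ u ∈ σ, ∃ w, u = GTerm.gvar w) : GTerm → GTerm
  | .lam t => .lam (globalizeStep r (.gvar (.app r t) :: σ)
      (by
        intro u hu
        rcases List.mem_cons.mp hu with h' | h'
        · exact ⟨_, h'⟩
        · exact h u h') t)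
  | .app t u => .app (globalizeStep r σ h t) (globalizeStep r σ h u)
  | .gvar t => .gvar t
  | .var i => msubst σ (.var i)
termination_by t => (gsize t, 1)
decreasing_by
  · apply Prod.Lex.left; simp only [gsize]; omega
  · apply Prod.Lex.left; simp only [gsize]; omega
  · apply Prod.Lex.left; simp only [gsize]; omega

noncomputable def globalizeStep (r : GTerm) (σ : List GTerm)
    (h : ∀ u ∈ σ, ∃ w, u = GTerm.gvar w) (t : GTerm) : GTerm :=
  if Closed t ∨ t ∈ duplicates r then globalize (msubst σ t)
  else globalizeScc r σ h t
termination_by (gsize t, 3)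
decreasing_by
  · rw [gsize_msubst σ h]; apply Prod.Lex.right; omega
  · apply Prod.Lex.right; omega
end

theorem GTerm.index_append (t : GTerm) (p q : Pos) :
    t.index (p ++ q) = (t.index p).bind (fun u => u.index q) := by
  induction p generalizing t with
  | nil => simp [GTerm.index]
  | cons x p ih =>
    cases t <;> cases x <;> simp [GTerm.index, ih]

theorem declift_index_isSome (d0 : ℕ) :
    ∀ (q : Pos) (u : GTerm) (d : ℕ),
    ((declift d0 u d).index q).isSome = (u.index q).isSome := by
  intro q
  induction q with
  | nil => intro u d; simp [GTerm.index]
  | cons x q ih =>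
    intro u d
    cases u with
    | var j => simp only [declift]; split <;> cases x <;> rfl
    | app a b => cases x <;> simp [declift, GTerm.index, ih]
    | lam a => cases x <;> simp [declift, GTerm.index, ih]
    | gvar a => cases x <;> rfl

/-- a single fork extends along any valid position of the subject. -/
theorem singleFork_extend (t₁ t₂ : GTerm) (p₁ p₂ : Pos)
    (h₁ : t₁.IsPure) (h₂ : t₂.IsPure)
    (hsf : SingleFork (t₁, p₁) (t₂, p₂)) :
    ∀ u, t₁.index p₁ = some u → ∀ r ∈ Valid u,
      SingleFork (t₁, p₁ ++ r) (t₂, p₂ ++ r) := by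
  intro u hu r hr
  rcases hsf with ⟨t, p, q₁, q₂, r₀, u', he₁, he₂, hn₁, hn₂, hp, hlc, hlift⟩ |
    ⟨ta, tb, pa, pb, r₀, u', he₁, he₂, hn₁, hn₂, hpa, hcl, hpb⟩
  · -- let-abs case
    injection he₁ with hA hB; subst hA; subst hB
    injection he₂ with hC hD; subst hC; subst hD
    -- extract w₁
    rw [List.append_assoc, GTerm.index_append, hp, Option.bind_some,
      GTerm.index_append] at hu
    obtain ⟨w₁, hw₁, hw₁r⟩ : ∃ w₁, u'.index q₁ = some w₁ ∧ w₁.index r₀ = some u := by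
      cases hq : u'.index q₁ with
      | none => rw [hq] at hu; simp at hu
      | some w => rw [hq] at hu; exact ⟨w, rfl, hu⟩
    -- extract w₂
    obtain ⟨w₂, hw₂, hdl⟩ : ∃ w₂, u'.index q₂ = some w₂ ∧
        declift (lamDepth q₁) w₁ 0 = declift (lamDepth q₂) w₂ 0 := by
      have := hlift
      unfold liftAt at this
      rw [hw₁] at this
      cases hq : u'.index q₂ with
      | none => rw [hq] at this; simp at this
      | some w =>
        rw [hq] at this
        simp only [Option.map_some, Option.some.injEq] at this
        exact ⟨w, rfl, this⟩
    -- validity of r₀ ++ r in w₁ and w₂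
    have hw₁v : (w₁.index (r₀ ++ r)).isSome := by
      rw [GTerm.index_append, hw₁r, Option.bind_some]
      exact hr
    have hw₂v : (w₂.index (r₀ ++ r)).isSome := by
      have h1 := declift_index_isSome (lamDepth q₁) (r₀ ++ r) w₁ 0
      have h2 := declift_index_isSome (lamDepth q₂) (r₀ ++ r) w₂ 0
      rw [hdl] at h1
      rw [← h2, h1]
      exact hw₁v
    left
    refine ⟨_, p, q₁, q₂, r₀ ++ r, u', ?_, ?_, ?_, ?_, hp, hlc, hlift⟩
    · simp [List.append_assoc]
    · simp [List.append_assoc]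
    · refine ⟨hn₁.1, ?_⟩
      simp only [Valid, Set.mem_setOf_eq, List.append_assoc]
      rw [GTerm.index_append, hp, Option.bind_some, GTerm.index_append, hw₁]
      exact hw₁v
    · refine ⟨hn₂.1, ?_⟩
      simp only [Valid, Set.mem_setOf_eq, List.append_assoc]
      rw [GTerm.index_append, hp, Option.bind_some, GTerm.index_append, hw₂]
      exact hw₂v
  · -- closed case
    injection he₁ with hA hB; subst hA; subst hB
    injection he₂ with hC hD; subst hC; subst hD
    rw [GTerm.index_append, hpa, Option.bind_some] at hu
    have huv : (u'.index (r₀ ++ r)).isSome := by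
      rw [GTerm.index_append, hu, Option.bind_some]
      exact hr
    right
    refine ⟨_, _, pa, pb, r₀ ++ r, u', ?_, ?_, ?_, ?_, hpa, hcl, hpb⟩
    · simp [List.append_assoc]
    · simp [List.append_assoc]
    · refine ⟨hn₁.1, ?_⟩
      simp only [Valid, Set.mem_setOf_eq]
      rw [GTerm.index_append, hpa, Option.bind_some]
      exact huv
    · refine ⟨hn₂.1, ?_⟩
      simp only [Valid, Set.mem_setOf_eq]
      rw [GTerm.index_append, hpb, Option.bind_some]
      exact huv

end HashAlpha
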